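/- Let Ω be a finite family of vectors with h coordinates (elements of ℕ^h). If Ω does not contain a vectorial sunflower of k petals, then |Ω| ≤ h! · ((h² − h + 1)·k)^h. -/

import Mathlib

/-- A finite family `P` of vectors of `h` coordinates forms a vectorial sunflower
(of `P.card` petals) if there is a set `I` of indices such that all vectors agree
on coordinates in `I`, and after deleting the coordinates in `I` the vectors have
pairwise disjoint sets of coordinates. -/
def IsVecSunflower {h : ℕ} (P : Finset (Fin h → ℕ)) : Prop :=
  ∃ I : Finset (Fin h),
    (∀ i ∈ I, ∀ x ∈ P, ∀ y ∈ P, x i = y i) ∧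
    (∀ x ∈ P, ∀ y ∈ P, x ≠ y → ∀ i, i ∉ I → ∀ j, j ∉ I → x i ≠ y j)

theorem stmt_9 (h k : ℕ) (Ω : Finset (Fin h → ℕ))
    (hΩ : ¬ ∃ P ⊆ Ω, P.card = k ∧ IsVecSunflower P) :
    Ω.card ≤ h.factorial * ((h ^ 2 - h + 1) * k) ^ h := by
  classical
  induction h with
  | zero =>
    have : Ω.card ≤ 1 := Finset.card_le_one.mpr
      (fun a _ b _ => funext (fun i => i.elim0))
    simpa using this
  | succ n ih =>
    -- dispose of k = 0
    rcases Nat.eq_zero_or_pos k with hk0 | hkpos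
    · exact absurd ⟨∅, Finset.empty_subset _, by simp [hk0],
        ⟨∅, by simp, by simp⟩⟩ hΩ
    obtain ⟨m, rfl⟩ : ∃ m, k = m + 1 := ⟨k - 1, by omega⟩
    -- any pairwise-value-disjoint subfamily has at most m elements
    have key : ∀ P : Finset (Fin (n+1) → ℕ), P ⊆ Ω →
        (∀ x ∈ P, ∀ y ∈ P, x ≠ y → ∀ i j, x i ≠ y j) → P.card ≤ m := by
      intro P hPΩ hPdisj
      by_contra hc
      push_neg at hc
      obtain ⟨Q, hQP, hQcard⟩ := Finset.exists_subset_card_eq (s := P) (n := m+1) (by omega)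
      exact hΩ ⟨Q, hQP.trans hPΩ, hQcard,
        ⟨∅, by simp, fun x hx y hy hxy i _ j _ =>
          hPdisj x (hQP hx) y (hQP hy) hxy i j⟩⟩
    -- a maximal pairwise-value-disjoint subfamily F
    set S : Finset (Finset (Fin (n+1) → ℕ)) :=
      Ω.powerset.filter (fun P => ∀ x ∈ P, ∀ y ∈ P, x ≠ y → ∀ i j, x i ≠ y j)
      with hSdef
    have hSne : (∅ : Finset (Fin (n+1) → ℕ)) ∈ S := by simp [hSdef]
    obtain ⟨F, hFmem, hFmax⟩ := Finset.exists_max_image S Finset.card ⟨∅, hSne⟩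
    rw [hSdef, Finset.mem_filter, Finset.mem_powerset] at hFmem
    obtain ⟨hFΩ, hFdisj⟩ := hFmem
    -- the set of values appearing in F
    set V : Finset ℕ := F.biUnion (fun y => Finset.image y Finset.univ) with hVdef
    have hVcard : V.card ≤ m * (n+1) := by
      calc V.card ≤ ∑ y ∈ F, (Finset.image y Finset.univ).card :=
            Finset.card_biUnion_le
        _ ≤ ∑ _y ∈ F, (n+1) := Finset.sum_le_sum
            (fun y _ => (Finset.card_image_le).trans (by simp))
        _ = F.card * (n+1) := by rw [Finset.sum_const, smul_eq_mul]
        _ ≤ m * (n+1) := Nat.mul_le_mul_right _ (key F hFΩ hFdisj)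
    -- every vector of Ω takes some value in V
    have hcover : ∀ x ∈ Ω, ∃ i, x i ∈ V := by
      intro x hx
      by_contra hcon
      push_neg at hcon
      have hxF : x ∉ F := fun hxF => hcon 0 (Finset.mem_biUnion.mpr
        ⟨x, hxF, Finset.mem_image.mpr ⟨0, Finset.mem_univ _, rfl⟩⟩)
      have hins : insert x F ∈ S := by
        rw [hSdef, Finset.mem_filter, Finset.mem_powerset]
        refine ⟨Finset.insert_subset hx hFΩ, ?_⟩
        intro a ha b hb hab i j he
        rcases Finset.mem_insert.mp ha with ha' | ha'
        · rcases Finset.mem_insert.mp hb with hb' | hb'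
          · exact hab (ha'.trans hb'.symm)
          · have hmem : b j ∈ V := Finset.mem_biUnion.mpr
              ⟨b, hb', Finset.mem_image.mpr ⟨j, Finset.mem_univ _, rfl⟩⟩
            rw [← he, ha'] at hmem
            exact hcon i hmem
        · rcases Finset.mem_insert.mp hb with hb' | hb'
          · have hmem : a i ∈ V := Finset.mem_biUnion.mpr
              ⟨a, ha', Finset.mem_image.mpr ⟨i, Finset.mem_univ _, rfl⟩⟩
            rw [he, hb'] at hmem
            exact hcon j hmem
          · exact hFdisj a ha' b hb' hab i j he
      have hle := hFmax _ hins
      rw [Finset.card_insert_of_notMem hxF] at hle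
      omega
    -- bound on each fiber {x ∈ Ω | x i = v}
    set B : ℕ := n.factorial * ((n^2 - n + 1) * (m+1)) ^ n with hBdef
    have fiber_bound : ∀ (i : Fin (n+1)) (v : ℕ),
        (Ω.filter (fun x => x i = v)).card ≤ B := by
      intro i v
      set T : Finset (Fin (n+1) → ℕ) := Ω.filter (fun x => x i = v) with hTdef
      have hinj : Set.InjOn (fun x => x ∘ i.succAbove) (T : Set (Fin (n+1) → ℕ)) := by
        intro a ha b hb hab
        rw [Finset.mem_coe, hTdef, Finset.mem_filter] at ha hb
        funext j
        rcases eq_or_ne j i with rfl | hji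
        · rw [ha.2, hb.2]
        · obtain ⟨j', rfl⟩ := Fin.exists_succAbove_eq hji
          exact congrFun hab j'
      have hcard : (T.image (fun x => x ∘ i.succAbove)).card = T.card :=
        Finset.card_image_of_injOn hinj
      rw [← hcard]
      apply ih
      rintro ⟨P', hP'sub, hP'card, I', hI'1, hI'2⟩
      apply hΩ
      have ins_inj : Function.Injective (fun y : Fin n → ℕ => i.insertNth (α := fun _ => ℕ) v y) := by
        intro a b hab
        funext j
        have := congrFun hab (i.succAbove j)
        simpa using this
      refine ⟨P'.image (fun y => i.insertNth (α := fun _ => ℕ) v y), ?_, ?_, ?_⟩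
      · intro x hx
        obtain ⟨y, hy, rfl⟩ := Finset.mem_image.mp hx
        obtain ⟨z, hz, rfl⟩ := Finset.mem_image.mp (hP'sub hy)
        rw [hTdef, Finset.mem_filter] at hz
        have hzz : i.insertNth v (z ∘ i.succAbove) = z := by
          funext j
          rcases eq_or_ne j i with rfl | hji
          · simp [hz.2]
          · obtain ⟨j', rfl⟩ := Fin.exists_succAbove_eq hji
            simp
        rw [hzz]
        exact hz.1
      · rw [Finset.card_image_of_injective _ ins_inj]
        exact hP'card
      · refine ⟨insert i (I'.image i.succAbove), ?_, ?_⟩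
        · intro j hj x hx y hy
          obtain ⟨a, ha, rfl⟩ := Finset.mem_image.mp hx
          obtain ⟨b, hb, rfl⟩ := Finset.mem_image.mp hy
          rcases Finset.mem_insert.mp hj with rfl | hj
          · simp
          · obtain ⟨j', hj', rfl⟩ := Finset.mem_image.mp hj
            simpa using hI'1 j' hj' a ha b hb
        · intro x hx y hy hxy j hj j' hj'
          obtain ⟨a, ha, rfl⟩ := Finset.mem_image.mp hx
          obtain ⟨b, hb, rfl⟩ := Finset.mem_image.mp hy
          have hab : a ≠ b := fun he => hxy (by rw [he])
          rw [Finset.mem_insert, not_or] at hj hj'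
          obtain ⟨c, rfl⟩ := Fin.exists_succAbove_eq (show j ≠ i from hj.1)
          obtain ⟨d, rfl⟩ := Fin.exists_succAbove_eq (show j' ≠ i from hj'.1)
          have hc : c ∉ I' := fun hc => hj.2
            (Finset.mem_image.mpr ⟨c, hc, rfl⟩)
          have hd : d ∉ I' := fun hd => hj'.2
            (Finset.mem_image.mpr ⟨d, hd, rfl⟩)
          simpa using hI'2 a ha b hb hab c hc d hd
    -- pigeonhole over pairs (coordinate, value)
    set g : (Fin (n+1) → ℕ) → Fin (n+1) × ℕ :=
      fun x => if hx : ∃ i, x i ∈ V then (hx.choose, x hx.choose) else (0, 0)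
      with hgdef
    have hmaps : ∀ x ∈ Ω, g x ∈ Finset.univ ×ˢ V := by
      intro x hx
      have h1 := hcover x hx
      rw [hgdef]
      simp only [dif_pos h1]
      exact Finset.mem_product.mpr ⟨Finset.mem_univ _, h1.choose_spec⟩
    have hsum := Finset.card_eq_sum_card_fiberwise hmaps
    have hfib : ∀ p ∈ Finset.univ ×ˢ V,
        (Ω.filter (fun x => g x = p)).card ≤ B := by
      intro p _
      refine le_trans (Finset.card_le_card ?_) (fiber_bound p.1 p.2)
      intro x hx
      rw [Finset.mem_filter] at hx ⊢
      refine ⟨hx.1, ?_⟩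
      have h1 := hcover x hx.1
      have hgx : g x = (h1.choose, x h1.choose) := by
        rw [hgdef]; exact dif_pos h1
      have hpx : p = (h1.choose, x h1.choose) := by rw [← hx.2, hgx]
      rw [hpx]
    have hΩle : Ω.card ≤ ((n+1) * V.card) * B := by
      rw [hsum]
      calc ∑ p ∈ Finset.univ ×ˢ V, (Ω.filter (fun x => g x = p)).card
          ≤ (Finset.univ ×ˢ V).card * B := by
            rw [← smul_eq_mul]
            exact Finset.sum_le_card_nsmul _ _ _ hfib
        _ = ((n+1) * V.card) * B := by
            rw [Finset.card_product, Finset.card_univ, Fintype.card_fin]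
    -- final arithmetic
    have hA : (n+1)^2 - (n+1) + 1 = n^2 + n + 1 := by
      have h2 : (n+1)^2 = n^2 + 2*n + 1 := by ring
      omega
    have ha : n^2 - n + 1 ≤ n^2 + n + 1 := by
      have := Nat.sub_le (n^2) n
      omega
    have e1 : m * (n+1) ≤ (n^2 + n + 1) * (m+1) := by nlinarith
    have e2 : ((n^2 - n + 1) * (m+1))^n ≤ ((n^2 + n + 1) * (m+1))^n :=
      Nat.pow_le_pow_left (Nat.mul_le_mul_right _ ha) n
    calc Ω.card ≤ ((n+1) * V.card) * B := hΩle
      _ ≤ ((n+1) * (m * (n+1))) * B :=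
          Nat.mul_le_mul_right _ (Nat.mul_le_mul_left _ hVcard)
      _ = (n+1) * n.factorial * ((m * (n+1)) * ((n^2 - n + 1) * (m+1))^n) := by
          rw [hBdef]; ring
      _ ≤ (n+1) * n.factorial * (((n^2 + n + 1) * (m+1)) * ((n^2 + n + 1) * (m+1))^n) :=
          Nat.mul_le_mul_left _ (Nat.mul_le_mul e1 e2)
      _ = (n+1) * n.factorial * ((n^2 + n + 1) * (m+1))^(n+1) := by
          rw [pow_succ' ((n^2 + n + 1) * (m+1)) n]
      _ = (n+1).factorial * (((n+1)^2 - (n+1) + 1) * (m+1))^(n+1) := by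
          rw [Nat.factorial_succ, hA]
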